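/- Let S be a set of at most min(n/2, m/2) of the 2mn variables such that for every block index i, S does not contain variables from both halves x^{(0,i)} and x^{(1,i)}. Then there exists an assignment of Boolean values to the variables outside S such that for every assignment of Boolean values to the variables in S, the resulting total input lies in X_0. -/

import Mathlib

open MvPolynomial Finset

/-- Interpret a Boolean as the real number 0 or 1. -/
def b2r (b : Bool) : ℝ := if b then 1 else 0

/-- A multilinear polynomial: every variable occurs with degree at most 1
in every monomial. -/
def IsMultilinear {σ : Type*} (p : MvPolynomial σ ℝ) : Prop :=
  ∀ s ∈ p.support, ∀ v, s v ≤ 1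

/-- Hamming weight of an `m`-bit string. -/
def weight {m : ℕ} (y : Fin m → Bool) : ℕ :=
  (Finset.univ.filter (fun j => y j = true)).card

/-- A block `z` (two `m`-bit halves, `z false` the first half and `z true`
the second half) lies in `A_b`: the half `z (!b)` is identically zero and
the half `z b` has Hamming weight at least `m / 2`. -/
def memA (m : ℕ) (b : Bool) (z : Bool → Fin m → Bool) : Prop :=
  (∀ j, z (!b) j = false) ∧ m / 2 ≤ weight (z b)

/-- `X_1`: all `n` blocks lie in `A_0`. -/
def memX1 (m n : ℕ) (x : Fin n → Bool → Fin m → Bool) : Prop :=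
  ∀ i, memA m false (x i)

/-- `X_0`: there is `y ∈ {0,1}^n` of Hamming weight `n / 2` such that
block `i` lies in `A_{y_i}` for every `i`. -/
def memX0 (m n : ℕ) (x : Fin n → Bool → Fin m → Bool) : Prop :=
  ∃ y : Fin n → Bool, weight y = n / 2 ∧ ∀ i, memA m (y i) (x i)

/-- Evaluation of a real polynomial in the `2mn` variables at a Boolean input. -/
noncomputable def evalB {m n : ℕ} (x : Fin n → Bool → Fin m → Bool)
    (p : MvPolynomial (Fin n × Bool × Fin m) ℝ) : ℝ :=
  MvPolynomial.eval (fun v => b2r (x v.1 v.2.1 v.2.2)) p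

/-- if `S` is a set of at most `min (n/2) (m/2)` variables not
containing variables from both halves of any block, then the variables outside
`S` can be fixed so that every assignment to the `S`-variables yields an input
in `X_0`. -/
theorem stmt6 (m n : ℕ) (hm : 0 < m) (hme : Even m) (hn : 0 < n) (hne : Even n)
    (S : Finset (Fin n × Bool × Fin m))
    (hcard : S.card ≤ min (n / 2) (m / 2))
    (hS : ∀ i : Fin n, ¬ ((∃ j, (i, false, j) ∈ S) ∧ (∃ j, (i, true, j) ∈ S))) :
    ∃ z : Fin n × Bool × Fin m → Bool, ∀ w : Fin n × Bool × Fin m → Bool,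
      memX0 m n (fun i b j => if (i, b, j) ∈ S then w (i, b, j) else z (i, b, j)) := by
  classical
  obtain ⟨k, hk⟩ := hne
  obtain ⟨l, hl⟩ := hme
  have hScard_n : S.card ≤ n / 2 := hcard.trans (min_le_left _ _)
  have hScard_m : S.card ≤ m / 2 := hcard.trans (min_le_right _ _)
  set B : Finset (Fin n) := S.image Prod.fst with hB
  set T : Finset (Fin n) := B.filter (fun i => ∃ j, (i, true, j) ∈ S) with hT
  have hBcard : B.card ≤ n / 2 := le_trans (Finset.card_image_le) hScard_n
  have hTB : T ⊆ B := Finset.filter_subset _ _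
  have hTcard : T.card ≤ n / 2 := le_trans (Finset.card_le_card hTB) hBcard
  obtain ⟨E, hEsub, hEcard⟩ : ∃ E ⊆ (Finset.univ \ B), E.card = n / 2 - T.card := by
    apply Finset.exists_subset_card_eq
    have hc : (Finset.univ \ B).card = n - B.card := by
      rw [Finset.card_sdiff_of_subset (Finset.subset_univ _), Finset.card_univ, Fintype.card_fin]
    omega
  set y : Fin n → Bool := fun i => decide (i ∈ T ∪ E) with hy
  refine ⟨fun v => (v.2.1 == y v.1), fun w => ⟨y, ?_, ?_⟩⟩
  · have hdisj : Disjoint T E := by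
      refine Finset.disjoint_left.mpr (fun a ha hae => ?_)
      have := hEsub hae
      simp only [Finset.mem_sdiff] at this
      exact this.2 (hTB ha)
    have : weight y = (T ∪ E).card := by
      unfold weight
      congr 1
      ext i
      simp [hy]
    rw [this, Finset.card_union_of_disjoint hdisj, hEcard]
    omega
  · intro i
    have hkey : ∀ b j, (i, b, j) ∈ S → b = y i := by
      intro b j hmem
      have hiB : i ∈ B := Finset.mem_image.mpr ⟨(i, b, j), hmem, rfl⟩
      have hiE : i ∉ E := by
        intro hmE
        have := hEsub hmE
        simp only [Finset.mem_sdiff] at this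
        exact this.2 hiB
      cases b with
      | true =>
        have hiT : i ∈ T := Finset.mem_filter.mpr ⟨hiB, ⟨j, hmem⟩⟩
        simp [hy, Finset.mem_union, hiT]
      | false =>
        have hiT : i ∉ T := by
          intro hiT
          obtain ⟨j', hj'⟩ := (Finset.mem_filter.mp hiT).2
          exact hS i ⟨⟨j, hmem⟩, ⟨j', hj'⟩⟩
        simp [hy, Finset.mem_union, hiT, hiE]
    have hinj : (Finset.univ.filter (fun j => (i, y i, j) ∈ S)).card ≤ S.card := by
      apply Finset.card_le_card_of_injOn (fun j => (i, y i, j))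
      · intro j hj
        exact (Finset.mem_filter.mp hj).2
      · intro a _ b _ h
        simpa using h
    have hsplit : (Finset.univ.filter (fun j => (i, y i, j) ∈ S)).card +
        (Finset.univ.filter (fun j => ¬ (i, y i, j) ∈ S)).card = m := by
      rw [Finset.card_filter_add_card_filter_not, Finset.card_univ,
        Fintype.card_fin]
    have hsub : Finset.univ.filter (fun j => ¬ (i, y i, j) ∈ S) ⊆
        Finset.univ.filter (fun j =>
          (if (i, y i, j) ∈ S then w (i, y i, j) else (y i == y i)) = true) := by
      intro j hj
      have hnot := (Finset.mem_filter.mp hj).2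
      simp [hnot]
    have hle := Finset.card_le_card hsub
    unfold memA weight
    refine ⟨fun j => ?_, ?_⟩
    · have hnot : (i, !(y i), j) ∉ S := by
        intro hmem
        have := hkey _ _ hmem
        simp at this
      simp [hnot]
    · calc m / 2 ≤ (Finset.univ.filter (fun j => ¬ (i, y i, j) ∈ S)).card := by omega
        _ ≤ _ := hle
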